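/- Let A ∈ ℝ^{n×n} be invertible, b ∈ ℝⁿ, γ ∈ (0,2), θ ∈ [0,1). Suppose x* satisfies Ax* − |x*| − b = 0 and ‖A^{-1}‖ < 1/[θ((2 − γ/2)‖A‖ + 1) + 2(1 − γ/2)‖A‖ + 1]. Then any sequence {x^k} in ℝⁿ satisfying the inexact Douglas–Rachford condition ‖(2/γ)A x^{k+1} − [((2/γ) − 1)A x^k + |x^k| + b]‖ ≤ θ‖Ax^k − |x^k| − b‖ for all k ≥ 0 converges linearly to x* from any starting point x^0. -/

import Mathlib

open Matrix Filter

/-- Componentwise absolute value of a vector in Euclidean space. -/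
noncomputable def vabs {n : ℕ} (x : EuclideanSpace ℝ (Fin n)) : EuclideanSpace ℝ (Fin n) :=
  WithLp.toLp 2 (fun i => |x i|)

/-- A matrix acting on Euclidean space (so that vector norms are the Euclidean 2-norm). -/
noncomputable def mulV {n : ℕ} (M : Matrix (Fin n) (Fin n) ℝ) (x : EuclideanSpace ℝ (Fin n)) :
    EuclideanSpace ℝ (Fin n) :=
  Matrix.toEuclideanCLM (𝕜 := ℝ) M x

/-- Spectral norm of a real matrix: the operator norm induced by the Euclidean vector norm. -/
noncomputable def spec {n : ℕ} (M : Matrix (Fin n) (Fin n) ℝ) : ℝ :=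
  ‖Matrix.toEuclideanCLM (𝕜 := ℝ) M‖

/-- The GAVE residual function `F(x) = A x − B |x| − b`. -/
noncomputable def gaveF {n : ℕ} (A B : Matrix (Fin n) (Fin n) ℝ)
    (b : EuclideanSpace ℝ (Fin n)) (x : EuclideanSpace ℝ (Fin n)) : EuclideanSpace ℝ (Fin n) :=
  mulV A x - mulV B (vabs x) - b

/-- The AVE residual function `A x − |x| − b` (the GAVE with `B = I`). -/
noncomputable def aveF {n : ℕ} (A : Matrix (Fin n) (Fin n) ℝ)
    (b : EuclideanSpace ℝ (Fin n)) (x : EuclideanSpace ℝ (Fin n)) : EuclideanSpace ℝ (Fin n) :=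
  mulV A x - vabs x - b

/-- A sequence converges linearly to `xs`: the distances to `xs` contract by a fixed
factor `c < 1` at every step, and the sequence tends to `xs`. -/
def ConvergesLinearlyTo {n : ℕ} (x : ℕ → EuclideanSpace ℝ (Fin n))
    (xs : EuclideanSpace ℝ (Fin n)) : Prop :=
  (∃ c : ℝ, 0 ≤ c ∧ c < 1 ∧ ∀ k : ℕ, ‖x (k + 1) - xs‖ ≤ c * ‖x k - xs‖) ∧
    Tendsto x atTop (nhds xs)

lemma vabs_sub_le {n : ℕ} (x y : EuclideanSpace ℝ (Fin n)) : ‖vabs x - vabs y‖ ≤ ‖x - y‖ := by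
  rw [EuclideanSpace.norm_eq, EuclideanSpace.norm_eq]
  apply Real.sqrt_le_sqrt
  apply Finset.sum_le_sum
  intro i _
  have h : |(vabs x - vabs y) i| ≤ |(x - y) i| := by
    simp only [vabs, PiLp.sub_apply, PiLp.toLp_apply]
    exact abs_abs_sub_abs_le_abs_sub _ _
  simp only [Real.norm_eq_abs]
  exact pow_le_pow_left₀ (abs_nonneg _) h 2

lemma mulV_sub {n : ℕ} (M : Matrix (Fin n) (Fin n) ℝ) (x y : EuclideanSpace ℝ (Fin n)) :
    mulV M (x - y) = mulV M x - mulV M y := map_sub _ _ _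

lemma mulV_smul_mat {n : ℕ} (s : ℝ) (M : Matrix (Fin n) (Fin n) ℝ) (x : EuclideanSpace ℝ (Fin n)) :
    mulV (s • M) x = s • mulV M x := by
  simp [mulV, _root_.map_smul]

lemma mulV_smul_vec {n : ℕ} (s : ℝ) (M : Matrix (Fin n) (Fin n) ℝ) (x : EuclideanSpace ℝ (Fin n)) :
    mulV M (s • x) = s • mulV M x := map_smul _ _ _

lemma mulV_norm_le {n : ℕ} (M : Matrix (Fin n) (Fin n) ℝ) (x : EuclideanSpace ℝ (Fin n)) :
    ‖mulV M x‖ ≤ spec M * ‖x‖ := (Matrix.toEuclideanCLM (𝕜 := ℝ) M).le_opNorm x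

lemma mulV_inv_mulV {n : ℕ} {A : Matrix (Fin n) (Fin n) ℝ} (hA : IsUnit A)
    (x : EuclideanSpace ℝ (Fin n)) : mulV A⁻¹ (mulV A x) = x := by
  have h : A⁻¹ * A = 1 := Matrix.nonsing_inv_mul A ((Matrix.isUnit_iff_isUnit_det A).mp hA)
  have h2 : mulV A⁻¹ (mulV A x) = mulV (A⁻¹ * A) x := by
    simp [mulV, _root_.map_mul]
  rw [h2, h]
  simp [mulV, _root_.map_one]

theorem stmt11 {n : ℕ} (A : Matrix (Fin n) (Fin n) ℝ)
    (b : EuclideanSpace ℝ (Fin n)) (hA : IsUnit A) (γ θ : ℝ)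
    (hγ0 : 0 < γ) (hγ2 : γ < 2) (hθ0 : 0 ≤ θ) (hθ1 : θ < 1)
    (xs : EuclideanSpace ℝ (Fin n)) (hxs : aveF A b xs = 0)
    (hcond : spec A⁻¹ <
      1 / (θ * ((2 - γ / 2) * spec A + 1) + 2 * (1 - γ / 2) * spec A + 1))
    (x : ℕ → EuclideanSpace ℝ (Fin n))
    (hx : ∀ k : ℕ, ‖mulV ((2 / γ) • A) (x (k + 1)) -
        (mulV ((2 / γ - 1) • A) (x k) + vabs (x k) + b)‖ ≤
      θ * ‖aveF A b (x k)‖) :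
    ConvergesLinearlyTo x xs := by
  set a := spec A with ha
  set ai := spec A⁻¹ with hai
  have ha0 : 0 ≤ a := norm_nonneg _
  have hai0 : 0 ≤ ai := norm_nonneg _
  have hb : b = mulV A xs - vabs xs := by
    have := hxs
    unfold aveF at this
    have h := sub_eq_zero.mp (by rw [sub_sub] at this; exact this)
    rw [h]; abel
  -- residual identity: aveF A b y = A(y - xs) - (|y| - |xs|)
  have hres : ∀ y : EuclideanSpace ℝ (Fin n),
      aveF A b y = mulV A (y - xs) - (vabs y - vabs xs) := by
    intro y
    unfold aveF
    rw [hb, mulV_sub]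
    abel
  set D : ℝ := θ * ((2 - γ / 2) * a + 1) + 2 * (1 - γ / 2) * a + 1 with hD
  set c : ℝ := ai * (γ / 2 * (θ * (a + 1)) + (1 - γ / 2) * a + γ / 2) with hc
  have hD1 : (1 : ℝ) ≤ D := by
    have h1 : (0:ℝ) ≤ 2 - γ/2 := by linarith
    have h2 : (0:ℝ) ≤ 1 - γ/2 := by linarith
    rw [hD]
    nlinarith [mul_nonneg hθ0 (mul_nonneg h1 ha0), mul_nonneg h2 ha0, mul_nonneg hθ0 h1,
      mul_nonneg hθ0 h2, mul_nonneg (mul_nonneg hθ0 (by linarith : (0:ℝ) ≤ 2 - γ)) ha0]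
  have hD0 : (0 : ℝ) < D := lt_of_lt_of_le one_pos hD1
  have hc0 : 0 ≤ c := by
    have h1 : (0:ℝ) ≤ γ/2 := by linarith
    have h2 : (0:ℝ) ≤ 1 - γ/2 := by linarith
    rw [hc]
    apply mul_nonneg hai0
    nlinarith [mul_nonneg h1 (mul_nonneg hθ0 (by linarith : (0:ℝ) ≤ a + 1)), mul_nonneg h2 ha0]
  have hc1 : c < 1 := by
    have h1 : ai * D < 1 := by
      calc ai * D < (1 / D) * D := mul_lt_mul_of_pos_right hcond hD0
        _ = 1 := by field_simp
    have hED : γ / 2 * (θ * (a + 1)) + (1 - γ / 2) * a + γ / 2 ≤ D := by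
      have hu1 : (0:ℝ) ≤ 1 - γ/2 := by linarith
      have hu2 : (0:ℝ) ≤ 2 - γ := by linarith
      rw [hD]
      nlinarith [mul_nonneg (mul_nonneg hθ0 hu2) ha0, mul_nonneg hθ0 hu1,
        mul_nonneg hu1 ha0]
    calc c ≤ ai * D := by
          rw [hc]; exact mul_le_mul_of_nonneg_left hED hai0
      _ < 1 := h1
  -- key per-step bound
  have hstep : ∀ k : ℕ, ‖x (k + 1) - xs‖ ≤ c * ‖x k - xs‖ := by
    intro k
    set e : EuclideanSpace ℝ (Fin n) := mulV ((2 / γ) • A) (x (k + 1)) -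
        (mulV ((2 / γ - 1) • A) (x k) + vabs (x k) + b) with he
    have hγne : γ ≠ 0 := ne_of_gt hγ0
    have key : mulV A (x (k + 1) - xs) =
        (γ / 2) • (e + mulV ((2 / γ - 1) • A) (x k - xs) + (vabs (x k) - vabs xs)) := by
      rw [he, hb]
      simp only [mulV_sub, mulV_smul_mat]
      match_scalars <;> field_simp <;> ring
    have hinv : x (k + 1) - xs = (γ / 2) • mulV A⁻¹
        (e + mulV ((2 / γ - 1) • A) (x k - xs) + (vabs (x k) - vabs xs)) := by
      rw [← mulV_smul_vec, ← key, mulV_inv_mulV hA]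
    have hFk : ‖aveF A b (x k)‖ ≤ (a + 1) * ‖x k - xs‖ := by
      rw [hres]
      calc ‖mulV A (x k - xs) - (vabs (x k) - vabs xs)‖
          ≤ ‖mulV A (x k - xs)‖ + ‖vabs (x k) - vabs xs‖ := norm_sub_le _ _
        _ ≤ a * ‖x k - xs‖ + ‖x k - xs‖ := by
            apply add_le_add (mulV_norm_le _ _) (vabs_sub_le _ _)
        _ = (a + 1) * ‖x k - xs‖ := by ring
    have hmid : ‖mulV ((2 / γ - 1) • A) (x k - xs)‖ ≤ (2 / γ - 1) * a * ‖x k - xs‖ := by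
      rw [mulV_smul_mat, norm_smul, Real.norm_eq_abs,
        abs_of_pos (by rw [sub_pos]; exact (one_lt_div hγ0).mpr hγ2)]
      rw [mul_assoc]
      exact mul_le_mul_of_nonneg_left (mulV_norm_le _ _)
        (by rw [sub_nonneg]; exact le_of_lt ((one_lt_div hγ0).mpr hγ2))
    have hsum : ‖e + mulV ((2 / γ - 1) • A) (x k - xs) + (vabs (x k) - vabs xs)‖
        ≤ (θ * (a + 1) + (2 / γ - 1) * a + 1) * ‖x k - xs‖ := by
      calc ‖e + mulV ((2 / γ - 1) • A) (x k - xs) + (vabs (x k) - vabs xs)‖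
          ≤ ‖e‖ + ‖mulV ((2 / γ - 1) • A) (x k - xs)‖ + ‖vabs (x k) - vabs xs‖ :=
            norm_add₃_le
        _ ≤ θ * ((a + 1) * ‖x k - xs‖) + (2 / γ - 1) * a * ‖x k - xs‖ + ‖x k - xs‖ := by
            apply add_le_add (add_le_add ?_ hmid) (vabs_sub_le _ _)
            calc ‖e‖ ≤ θ * ‖aveF A b (x k)‖ := hx k
              _ ≤ θ * ((a + 1) * ‖x k - xs‖) := mul_le_mul_of_nonneg_left hFk hθ0
        _ = (θ * (a + 1) + (2 / γ - 1) * a + 1) * ‖x k - xs‖ := by ring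
    rw [hinv, norm_smul, Real.norm_eq_abs, abs_of_pos (by linarith)]
    calc γ / 2 * ‖mulV A⁻¹ (e + mulV ((2 / γ - 1) • A) (x k - xs) + (vabs (x k) - vabs xs))‖
        ≤ γ / 2 * (ai * ((θ * (a + 1) + (2 / γ - 1) * a + 1) * ‖x k - xs‖)) := by
          apply mul_le_mul_of_nonneg_left ?_ (by linarith)
          calc ‖mulV A⁻¹ (e + mulV ((2 / γ - 1) • A) (x k - xs) + (vabs (x k) - vabs xs))‖
              ≤ ai * ‖e + mulV ((2 / γ - 1) • A) (x k - xs) + (vabs (x k) - vabs xs)‖ :=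
              mulV_norm_le _ _
            _ ≤ ai * ((θ * (a + 1) + (2 / γ - 1) * a + 1) * ‖x k - xs‖) :=
              mul_le_mul_of_nonneg_left hsum hai0
      _ = c * ‖x k - xs‖ := by
          rw [hc]
          have hγγ : γ/2 * (2/γ - 1) = 1 - γ/2 := by
            field_simp
          linear_combination (ai * a * ‖x k - xs‖) * hγγ
  -- convergence
  have hpow : ∀ k : ℕ, ‖x k - xs‖ ≤ c ^ k * ‖x 0 - xs‖ := by
    intro k
    induction k with
    | zero => simp
    | succ k ih =>
        calc ‖x (k + 1) - xs‖ ≤ c * ‖x k - xs‖ := hstep k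
          _ ≤ c * (c ^ k * ‖x 0 - xs‖) := mul_le_mul_of_nonneg_left ih hc0
          _ = c ^ (k + 1) * ‖x 0 - xs‖ := by ring
  have htend : Tendsto x atTop (nhds xs) := by
    rw [tendsto_iff_norm_sub_tendsto_zero]
    apply squeeze_zero (fun k => norm_nonneg _) hpow
    have := (tendsto_pow_atTop_nhds_zero_of_lt_one hc0 hc1).mul_const ‖x 0 - xs‖
    simpa using this
  exact ⟨⟨c, hc0, hc1, hstep⟩, htend⟩
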